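/- The function q(x,t) = 1 - 4/(4(x-6t)^2+1) satisfies the focusing complex mKdV equation q_t + q_{xxx} + 6|q|^2 q_x = 0 for all real x, t. -/

import Mathlib

private lemma den_ne (u : ℝ) : (4 * u ^ 2 + 1) ≠ 0 := by positivity

private lemma hD (c x : ℝ) : HasDerivAt (fun y : ℝ => 4 * (y - c) ^ 2 + 1) (8 * (x - c)) x := by
  have h : HasDerivAt (fun y : ℝ => y - c) 1 x := (hasDerivAt_id x).sub_const c
  have := ((h.fun_pow 2).const_mul 4).add_const 1
  refine this.congr_deriv ?_
  ring

private lemma l1 (c x : ℝ) :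
    HasDerivAt (fun y : ℝ => 1 - 4 / (4 * (y - c) ^ 2 + 1))
      (32 * (x - c) / (4 * (x - c) ^ 2 + 1) ^ 2) x := by
  have h := ((hasDerivAt_const x (4:ℝ)).fun_div (hD c x) (den_ne _)).const_sub 1
  refine h.congr_deriv ?_
  field_simp
  ring

private lemma l2 (c x : ℝ) :
    HasDerivAt (fun y : ℝ => 32 * (y - c) / (4 * (y - c) ^ 2 + 1) ^ 2)
      (32 / (4 * (x - c) ^ 2 + 1) ^ 2 - 512 * (x - c) ^ 2 / (4 * (x - c) ^ 2 + 1) ^ 3) x := by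
  have hn : HasDerivAt (fun y : ℝ => 32 * (y - c)) 32 x := by
    simpa using ((hasDerivAt_id x).sub_const c).const_mul 32
  have hd : HasDerivAt (fun y : ℝ => (4 * (y - c) ^ 2 + 1) ^ 2)
      (2 * (4 * (x - c) ^ 2 + 1) * (8 * (x - c))) x := by
    have := (hD c x).fun_pow 2
    refine this.congr_deriv ?_
    ring
  have h := hn.fun_div hd (by positivity)
  refine h.congr_deriv ?_
  field_simp
  ring

private lemma l3 (c x : ℝ) :
    HasDerivAt (fun y : ℝ => 32 / (4 * (y - c) ^ 2 + 1) ^ 2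
        - 512 * (y - c) ^ 2 / (4 * (y - c) ^ 2 + 1) ^ 3)
      (-1536 * (x - c) / (4 * (x - c) ^ 2 + 1) ^ 3
        + 12288 * (x - c) ^ 3 / (4 * (x - c) ^ 2 + 1) ^ 4) x := by
  have hd2 : HasDerivAt (fun y : ℝ => (4 * (y - c) ^ 2 + 1) ^ 2)
      (2 * (4 * (x - c) ^ 2 + 1) * (8 * (x - c))) x := by
    have := (hD c x).fun_pow 2
    refine this.congr_deriv ?_; ring
  have hd3 : HasDerivAt (fun y : ℝ => (4 * (y - c) ^ 2 + 1) ^ 3)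
      (3 * (4 * (x - c) ^ 2 + 1) ^ 2 * (8 * (x - c))) x := by
    have := (hD c x).fun_pow 3
    refine this.congr_deriv ?_; norm_num
  have hn : HasDerivAt (fun y : ℝ => 512 * (y - c) ^ 2) (512 * (2 * (x - c))) x := by
    have := (((hasDerivAt_id x).sub_const c).fun_pow 2).const_mul 512
    refine this.congr_deriv ?_
    simp only [id_eq]
    ring
  have h1 := (hasDerivAt_const x (32:ℝ)).fun_div hd2 (by positivity)
  have h2 := hn.fun_div hd3 (by positivity)
  have h := h1.sub h2
  refine h.congr_deriv ?_
  field_simp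
  ring

private lemma lt (x t : ℝ) :
    HasDerivAt (fun s : ℝ => 1 - 4 / (4 * (x - 6 * s) ^ 2 + 1))
      (-192 * (x - 6 * t) / (4 * (x - 6 * t) ^ 2 + 1) ^ 2) t := by
  have hu : HasDerivAt (fun s : ℝ => x - 6 * s) (-6) t := by
    simpa using ((hasDerivAt_id t).const_mul 6).const_sub x
  have hd : HasDerivAt (fun s : ℝ => 4 * (x - 6 * s) ^ 2 + 1)
      (4 * (2 * (x - 6 * t) * (-6))) t := by
    have := ((hu.fun_pow 2).const_mul 4).add_const 1
    refine this.congr_deriv ?_; ring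
  have h := ((hasDerivAt_const t (4:ℝ)).fun_div hd (den_ne _)).const_sub 1
  refine h.congr_deriv ?_
  field_simp
  ring

/-- The first-order rational soliton `q(x,t) = 1 - 4/(4(x-6t)^2+1)` satisfies the
focusing complex mKdV equation `q_t + q_{xxx} + 6 q^2 q_x = 0` (real-valued, so
`|q|^2 = q^2`). -/
theorem first_order_rational_soliton_solves_cmKdV
    (q : ℝ → ℝ → ℝ)
    (hq : ∀ x t : ℝ, q x t = 1 - 4 / (4 * (x - 6 * t) ^ 2 + 1)) :
    ∀ x t : ℝ,
      deriv (fun s => q x s) t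
        + iteratedDeriv 3 (fun y => q y t) x
        + 6 * (q x t) ^ 2 * deriv (fun y => q y t) x = 0 := by
  intro x t
  set c := 6 * t with hc
  have hfx : (fun y => q y t) = fun y : ℝ => 1 - 4 / (4 * (y - c) ^ 2 + 1) := by
    funext y; rw [hq]
  have hft : (fun s => q x s) = fun s : ℝ => 1 - 4 / (4 * (x - 6 * s) ^ 2 + 1) := by
    funext s; rw [hq]
  have hqv : q x t = 1 - 4 / (4 * (x - c) ^ 2 + 1) := hq x t
  -- time derivative
  have ht : deriv (fun s => q x s) t = -192 * (x - c) / (4 * (x - c) ^ 2 + 1) ^ 2 := by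
    rw [hft]; exact (lt x t).deriv
  -- first spatial derivative (as a function)
  have h1 : deriv (fun y => q y t) = fun y : ℝ => 32 * (y - c) / (4 * (y - c) ^ 2 + 1) ^ 2 := by
    funext y; rw [hfx]; exact (l1 c y).deriv
  have h2 : deriv (deriv (fun y => q y t))
      = fun y : ℝ => 32 / (4 * (y - c) ^ 2 + 1) ^ 2
          - 512 * (y - c) ^ 2 / (4 * (y - c) ^ 2 + 1) ^ 3 := by
    funext y; rw [h1]; exact (l2 c y).deriv
  have h3 : iteratedDeriv 3 (fun y => q y t) x
      = -1536 * (x - c) / (4 * (x - c) ^ 2 + 1) ^ 3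
          + 12288 * (x - c) ^ 3 / (4 * (x - c) ^ 2 + 1) ^ 4 := by
    have e3 : iteratedDeriv 3 (fun y => q y t) = deriv (deriv (deriv (fun y => q y t))) := by
      simp [iteratedDeriv_eq_iterate]
    rw [e3, h2]
    exact (l3 c x).deriv
  have hx1 : deriv (fun y => q y t) x = 32 * (x - c) / (4 * (x - c) ^ 2 + 1) ^ 2 := by
    rw [h1]
  rw [ht, h3, hx1, hqv]
  have hne := den_ne (x - c)
  field_simp
  ring
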